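/- arXiv:1705.05675 — 4 statements merged into one kernel-verified Lean document; each statement's English description precedes it below -/
import Mathlib

section
/- For all natural numbers a, b, c, d, n, we have ∑_{k=0}^{n} C(a,k)·C(b,n−k)·C(k,c)·C(n−k,d) = C(a+b−c−d, n−c−d)·C(a,c)·C(b,d). -/
/-- Binomial coefficient for integers: `C x y` is the usual binomial coefficient
when `0 ≤ y ≤ x`, and `0` otherwise. -/
def C (x y : ℤ) : ℤ := if 0 ≤ y ∧ y ≤ x then (x.toNat.choose y.toNat : ℤ) else 0

lemma C_natCast (m l : ℕ) : C (m : ℤ) (l : ℤ) = (m.choose l : ℤ) := by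
  unfold C
  by_cases h : l ≤ m
  · rw [if_pos ⟨Int.natCast_nonneg _, by exact_mod_cast h⟩]
    simp
  · rw [if_neg (by omega), Nat.choose_eq_zero_of_lt (by omega)]
    simp

lemma choose_helper {a c : ℕ} (hc : c ≤ a) (j : ℕ) :
    a.choose (c + j) * (c + j).choose c = a.choose c * (a - c).choose j := by
  by_cases h : c + j ≤ a
  · rw [Nat.choose_mul (n := a) (Nat.le_add_right c j), Nat.add_sub_cancel_left]
  · rw [Nat.choose_eq_zero_of_lt (show a < c + j by omega),
      Nat.choose_eq_zero_of_lt (show a - c < j by omega)]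
    simp

lemma key (a b c d n : ℕ) (h : c + d ≤ n) :
    ∑ k ∈ Finset.range (n + 1),
        a.choose k * b.choose (n - k) * k.choose c * (n - k).choose d
      = (a + b - c - d).choose (n - c - d) * a.choose c * b.choose d := by
  by_cases hcd : c ≤ a ∧ d ≤ b
  · obtain ⟨hc, hd⟩ := hcd
    set m := n - c - d with hm
    have h1 : ∑ k ∈ Finset.range (n + 1),
        a.choose k * b.choose (n - k) * k.choose c * (n - k).choose d
        = ∑ k ∈ Finset.Ico c (n - d + 1),
        a.choose k * b.choose (n - k) * k.choose c * (n - k).choose d := by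
      refine (Finset.sum_subset ?_ ?_).symm
      · intro x hx
        simp only [Finset.mem_Ico, Finset.mem_range] at hx ⊢
        omega
      · intro x hx hx2
        simp only [Finset.mem_Ico, Finset.mem_range] at hx hx2
        rcases (by omega : x < c ∨ n - x < d) with h' | h'
        · rw [Nat.choose_eq_zero_of_lt h']; ring
        · rw [Nat.choose_eq_zero_of_lt h']; ring
    rw [h1, Finset.sum_Ico_eq_sum_range]
    have h2 : n - d + 1 - c = m + 1 := by omega
    rw [h2]
    have h3 : ∀ j ∈ Finset.range (m + 1),
        a.choose (c + j) * b.choose (n - (c + j)) * (c + j).choose c *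
          (n - (c + j)).choose d
        = a.choose c * b.choose d *
            ((a - c).choose j * (b - d).choose (m - j)) := by
      intro j hj
      simp only [Finset.mem_range] at hj
      have hnd : n - (c + j) = d + (m - j) := by omega
      calc a.choose (c + j) * b.choose (n - (c + j)) * (c + j).choose c *
          (n - (c + j)).choose d
          = (a.choose (c + j) * (c + j).choose c) *
            (b.choose (d + (m - j)) * (d + (m - j)).choose d) := by rw [hnd]; ring
        _ = (a.choose c * (a - c).choose j) * (b.choose d * (b - d).choose (m - j)) := by
              rw [choose_helper hc, choose_helper hd]
        _ = _ := by ring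
    rw [Finset.sum_congr rfl h3, ← Finset.mul_sum]
    have h4 : ∑ j ∈ Finset.range (m + 1), (a - c).choose j * (b - d).choose (m - j)
        = ((a - c) + (b - d)).choose m := by
      rw [Nat.add_choose_eq, Finset.Nat.sum_antidiagonal_eq_sum_range_succ_mk]
    rw [h4]
    have h5 : (a - c) + (b - d) = a + b - c - d := by omega
    rw [h5]; ring
  · have hz : a.choose c * b.choose d = 0 := by
      rcases (by omega : a < c ∨ b < d) with h' | h'
      · rw [Nat.choose_eq_zero_of_lt h']; ring
      · rw [Nat.choose_eq_zero_of_lt h']; ring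
    have hterm : ∀ k ∈ Finset.range (n + 1),
        a.choose k * b.choose (n - k) * k.choose c * (n - k).choose d = 0 := by
      intro k hk
      rcases (by omega : a < c ∨ b < d) with h' | h'
      · by_cases hka : k ≤ a
        · rw [Nat.choose_eq_zero_of_lt (by omega : k < c)]; ring
        · rw [Nat.choose_eq_zero_of_lt (by omega : a < k)]; ring
      · by_cases hkb : n - k ≤ b
        · rw [Nat.choose_eq_zero_of_lt (by omega : n - k < d)]; ring
        · rw [Nat.choose_eq_zero_of_lt (by omega : b < n - k)]; ring
    rw [Finset.sum_eq_zero hterm,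
      show (a + b - c - d).choose (n - c - d) * a.choose c * b.choose d
          = (a + b - c - d).choose (n - c - d) * (a.choose c * b.choose d) from by ring,
      hz, Nat.mul_zero]

theorem stmt_0 (a b c d n : ℕ) :
    ∑ k ∈ Finset.range (n + 1), C a k * C b ((n : ℤ) - k) * C k c * C ((n : ℤ) - k) d = C ((a : ℤ) + b - c - d) ((n : ℤ) - c - d) * C a c * C b d := by
  have hL : ∑ k ∈ Finset.range (n + 1), C a k * C b ((n : ℤ) - k) * C k c * C ((n : ℤ) - k) d
      = ((∑ k ∈ Finset.range (n + 1),
          a.choose k * b.choose (n - k) * k.choose c * (n - k).choose d : ℕ) : ℤ) := by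
    push_cast
    apply Finset.sum_congr rfl
    intro k hk
    simp only [Finset.mem_range] at hk
    have hnk : (n : ℤ) - k = ((n - k : ℕ) : ℤ) := by omega
    rw [hnk, C_natCast, C_natCast, C_natCast, C_natCast]
  rw [hL, C_natCast, C_natCast]
  by_cases h : c + d ≤ n
  · rw [key a b c d n h]
    have h1 : ((n : ℤ) - c - d) = ((n - c - d : ℕ) : ℤ) := by omega
    rw [h1]
    by_cases hab : c + d ≤ a + b
    · have h2 : ((a : ℤ) + b - c - d) = ((a + b - c - d : ℕ) : ℤ) := by omega
      rw [h2, C_natCast]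
      push_cast; ring
    · have hC : C ((a : ℤ) + b - c - d) ((n - c - d : ℕ) : ℤ) = 0 := by
        unfold C
        rw [if_neg]
        rintro ⟨h3, h4⟩
        omega
      rw [hC]
      have hz : a.choose c * b.choose d = 0 := by
        rcases (by omega : a < c ∨ b < d) with h' | h'
        · rw [Nat.choose_eq_zero_of_lt h']; ring
        · rw [Nat.choose_eq_zero_of_lt h']; ring
      have hz' : (a.choose c : ℤ) * (b.choose d : ℤ) = 0 := by exact_mod_cast hz
      push_cast
      calc ((a + b - c - d).choose (n - c - d) : ℤ) * a.choose c * b.choose d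
          = ((a + b - c - d).choose (n - c - d) : ℤ) * ((a.choose c : ℤ) * b.choose d) := by
            ring
        _ = 0 := by rw [hz']; ring
        _ = 0 * ((a.choose c : ℤ)) * ((b.choose d : ℤ)) := by ring
  · have hC : C ((a : ℤ) + b - c - d) ((n : ℤ) - c - d) = 0 := by
      unfold C
      rw [if_neg]
      rintro ⟨h3, h4⟩
      omega
    rw [hC]
    have hterm : ∀ k ∈ Finset.range (n + 1),
        a.choose k * b.choose (n - k) * k.choose c * (n - k).choose d = 0 := by
      intro k hk
      simp only [Finset.mem_range] at hk
      rcases (by omega : k < c ∨ n - k < d) with h' | h'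
      · rw [Nat.choose_eq_zero_of_lt h']; ring
      · rw [Nat.choose_eq_zero_of_lt h']; ring
    rw [Finset.sum_eq_zero hterm]
    push_cast; ring
end

section
/- For all natural numbers a, b, c, d, m, we have ∑_{k=0}^{a} C(a,k)·C(b,m+k)·C(k,c)·C(m+k,d) = C(a+b−c−d, m+a−d)·C(a,c)·C(b,d). -/
lemma C_eq_zero {x y : ℤ} (h : ¬ (0 ≤ y ∧ y ≤ x)) : C x y = 0 := if_neg h

lemma C_natCast_s1 (n k : ℕ) : C (n : ℤ) (k : ℤ) = (n.choose k : ℤ) := by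
  by_cases h : (k : ℤ) ≤ (n : ℤ)
  · rw [C, if_pos ⟨Int.natCast_nonneg k, h⟩]
    simp
  · rw [C, if_neg (by tauto)]
    rw [Nat.choose_eq_zero_of_lt (by exact_mod_cast not_le.mp h)]
    simp

/-- Pascal's rule for the extended binomial coefficient, with natural top. -/
lemma C_pascal (n : ℕ) (y : ℤ) : C ((n : ℤ) + 1) y = C n y + C n (y - 1) := by
  rcases lt_or_ge y 0 with hy | hy
  · rw [C_eq_zero (by omega), C_eq_zero (by omega), C_eq_zero (by omega)]
    ring
  · obtain ⟨k, rfl⟩ := Int.eq_ofNat_of_zero_le hy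
    cases k with
    | zero =>
      rw [C_eq_zero (x := (n : ℤ)) (y := ((0:ℕ):ℤ) - 1) (by omega)]
      rw [show ((n : ℤ) + 1) = ((n + 1 : ℕ) : ℤ) by push_cast; ring]
      rw [C_natCast_s1, C_natCast_s1]
      simp
    | succ j =>
      rw [show ((n : ℤ) + 1) = ((n + 1 : ℕ) : ℤ) by push_cast; ring]
      rw [show ((j + 1 : ℕ) : ℤ) - 1 = ((j : ℕ) : ℤ) by push_cast; ring]
      rw [C_natCast_s1, C_natCast_s1, C_natCast_s1, Nat.choose_succ_succ]
      push_cast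
      ring

/-- Symmetry, unconditionally. -/
lemma C_symm (x y : ℤ) : C x y = C x (x - y) := by
  by_cases h : 0 ≤ y ∧ y ≤ x
  · rw [C, if_pos h, C, if_pos ⟨by omega, by omega⟩]
    have h1 : (x - y).toNat = x.toNat - y.toNat := by omega
    have h2 : y.toNat ≤ x.toNat := by omega
    rw [h1, Nat.choose_symm h2]
  · rw [C_eq_zero h, C_eq_zero (by omega)]

/-- Trinomial revision, unconditionally. -/
lemma C_trinomial (x y z : ℤ) : C x y * C y z = C x z * C (x - z) (y - z) := by
  by_cases h : 0 ≤ z ∧ z ≤ y ∧ y ≤ x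
  · rw [C, if_pos ⟨by omega, by omega⟩, C, if_pos ⟨by omega, by omega⟩,
      C, if_pos ⟨by omega, by omega⟩, C, if_pos ⟨by omega, by omega⟩]
    have h1 : (x - z).toNat = x.toNat - z.toNat := by omega
    have h2 : (y - z).toNat = y.toNat - z.toNat := by omega
    rw [h1, h2, ← Nat.cast_mul, ← Nat.cast_mul,
      Nat.choose_mul (by omega)]
  · -- both sides are zero
    have hL : C x y * C y z = 0 := by
      by_cases h1 : 0 ≤ y ∧ y ≤ x
      · rw [C_eq_zero (y := z) (by omega), mul_zero]
      · rw [C_eq_zero h1, zero_mul]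
    have hR : C x z * C (x - z) (y - z) = 0 := by
      by_cases h1 : 0 ≤ z ∧ z ≤ x
      · rw [C_eq_zero (x := x - z) (by omega), mul_zero]
      · rw [C_eq_zero h1, zero_mul]
    rw [hL, hR]

/-- Vandermonde for the extended binomial coefficient. -/
lemma C_vandermonde (n p : ℕ) (q : ℤ) :
    ∑ j ∈ Finset.range (n + 1), C n j * C p (q - j) = C ((n : ℤ) + p) q := by
  induction n generalizing q with
  | zero =>
    simp only [Finset.sum_range_one, Nat.cast_zero, zero_add, sub_zero]
    norm_num [C]
  | succ n ih =>
    have key : ∀ k ∈ Finset.range (n + 2),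
        C ((n : ℤ) + 1) k * C p (q - k) = C n k * C p (q - k) + C n ((k : ℤ) - 1) * C p (q - k) := by
      intro k _
      rw [C_pascal]
      ring
    rw [show ((n + 1 : ℕ) : ℤ) = (n : ℤ) + 1 by push_cast; ring]
    rw [Finset.sum_congr rfl key, Finset.sum_add_distrib]
    have e1 : ∑ k ∈ Finset.range (n + 2), C n k * C p (q - k) = C ((n : ℤ) + p) q := by
      rw [Finset.sum_range_succ, C_eq_zero (x := (n : ℤ)) (y := ((n + 1 : ℕ) : ℤ)) (by omega),
        zero_mul, add_zero, ih]
    have e2 : ∑ k ∈ Finset.range (n + 2), C n ((k : ℤ) - 1) * C p (q - k) = C ((n : ℤ) + p) (q - 1) := by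
      rw [Finset.sum_range_succ']
      have : ∀ i ∈ Finset.range (n + 1),
          C n (((i + 1 : ℕ) : ℤ) - 1) * C p (q - ((i + 1 : ℕ) : ℤ)) = C n i * C p ((q - 1) - i) := by
        intro i _
        congr 2 <;> push_cast <;> ring
      rw [Finset.sum_congr rfl this, ih,
        C_eq_zero (x := (n : ℤ)) (y := ((0 : ℕ) : ℤ) - 1) (by omega), zero_mul, add_zero]
    rw [e1, e2, show (n : ℤ) + 1 + p = ((n : ℤ) + p) + 1 by ring]
    rw [show ((n : ℤ) + p) = ((n + p : ℕ) : ℤ) by push_cast; ring, C_pascal]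

theorem stmt_1 (a b c d m : ℕ) :
    ∑ k ∈ Finset.range (a + 1), C a k * C b ((m : ℤ) + k) * C k c * C ((m : ℤ) + k) d = C ((a : ℤ) + b - c - d) ((m : ℤ) + a - d) * C a c * C b d := by
  have step1 : ∀ k ∈ Finset.range (a + 1),
      C a k * C b ((m : ℤ) + k) * C k c * C ((m : ℤ) + k) d
        = C a c * C b d * (C ((a : ℤ) - c) ((k : ℤ) - c) * C ((b : ℤ) - d) ((m : ℤ) + k - d)) := by
    intro k _
    have h1 : C (a : ℤ) k * C (k : ℤ) c = C (a : ℤ) c * C ((a : ℤ) - c) ((k : ℤ) - c) :=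
      C_trinomial _ _ _
    have h2 : C (b : ℤ) ((m : ℤ) + k) * C ((m : ℤ) + k) d = C (b : ℤ) d * C ((b : ℤ) - d) ((m : ℤ) + k - d) :=
      C_trinomial _ _ _
    calc C a k * C b ((m : ℤ) + k) * C k c * C ((m : ℤ) + k) d
        = (C (a : ℤ) k * C (k : ℤ) c) * (C (b : ℤ) ((m : ℤ) + k) * C ((m : ℤ) + k) d) := by ring
      _ = _ := by rw [h1, h2]; ring
  rw [Finset.sum_congr rfl step1, ← Finset.mul_sum]
  by_cases hac : c ≤ a
  · by_cases hbd : d ≤ b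
    · -- main case
      have step2 : ∀ k ∈ Finset.range (a + 1),
          C ((a : ℤ) - c) ((k : ℤ) - c) * C ((b : ℤ) - d) ((m : ℤ) + k - d)
            = C ((a : ℤ) - c) ((k : ℤ) - c) * C ((b : ℤ) - d) (((b : ℤ) - m - c) - ((k : ℤ) - c)) := by
        intro k _
        rw [C_symm ((b : ℤ) - d) ((m : ℤ) + k - d)]
        congr 2
        ring
      rw [Finset.sum_congr rfl step2]
      -- drop the first c terms (they are zero) and reindex
      have hsplit : Finset.range (a + 1) = Finset.Ico 0 (a + 1) := by
        rw [Finset.range_eq_Ico]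
      rw [hsplit, ← Finset.sum_Ico_consecutive _ (Nat.zero_le c) (by omega : c ≤ a + 1)]
      have hzero : ∑ k ∈ Finset.Ico 0 c,
          C ((a : ℤ) - c) ((k : ℤ) - c) * C ((b : ℤ) - d) (((b : ℤ) - m - c) - ((k : ℤ) - c)) = 0 := by
        apply Finset.sum_eq_zero
        intro k hk
        simp only [Finset.mem_Ico] at hk
        rw [C_eq_zero (x := (a : ℤ) - c) (by omega), zero_mul]
      rw [hzero, zero_add]
      rw [Finset.sum_Ico_eq_sum_range]
      have hcount : a + 1 - c = (a - c) + 1 := by omega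
      rw [hcount]
      have step3 : ∀ i ∈ Finset.range ((a - c) + 1),
          C ((a : ℤ) - c) (((c + i : ℕ) : ℤ) - c) * C ((b : ℤ) - d) (((b : ℤ) - m - c) - (((c + i : ℕ) : ℤ) - c))
            = C ((a - c : ℕ) : ℤ) (i : ℤ) * C ((b - d : ℕ) : ℤ) (((b : ℤ) - m - c) - i) := by
        intro i _
        have e1 : ((c + i : ℕ) : ℤ) - c = (i : ℤ) := by push_cast; ring
        have e2 : ((a : ℤ) - c) = ((a - c : ℕ) : ℤ) := by omega
        have e3 : ((b : ℤ) - d) = ((b - d : ℕ) : ℤ) := by omega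
        rw [e1, e2, e3]
      rw [Finset.sum_congr rfl step3, C_vandermonde (a - c) (b - d) ((b : ℤ) - m - c)]
      -- now identify with RHS
      rw [C_symm ((a : ℤ) + b - c - d) ((m : ℤ) + a - d)]
      have e4 : ((a - c : ℕ) : ℤ) + (b - d : ℕ) = (a : ℤ) + b - c - d := by omega
      have e5 : (a : ℤ) + b - c - d - ((m : ℤ) + a - d) = (b : ℤ) - m - c := by ring
      rw [e4, e5]
      ring
    · rw [C_eq_zero (x := (b : ℤ)) (y := (d : ℤ)) (by omega)]
      ring
  · rw [C_eq_zero (x := (a : ℤ)) (y := (c : ℤ)) (by omega)]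
    ring
end

section
/- For all natural numbers a, b, d, n, p, we have ∑_{k=0}^{n} C(a,k)·C(b,n−k)·C(p−k, a+b−d)·C(n−k,d) = C(d+p−n, a+b−n)·C(p−a, n−d)·C(b,d). -/
lemma C_nat (x y : ℕ) : C x y = x.choose y := by
  rcases le_or_gt y x with h | h
  · rw [C, if_pos ⟨Int.natCast_nonneg y, by exact_mod_cast h⟩]
    simp
  · rw [C, if_neg (by omega), Nat.choose_eq_zero_of_lt h, Int.natCast_zero]

lemma C_zero_of_lt {x y : ℤ} (h : x < y) : C x y = 0 := by
  rw [C, if_neg (by omega)]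

lemma C_zero_of_neg {x y : ℤ} (h : y < 0) : C x y = 0 := by
  rw [C, if_neg (by omega)]

lemma vand (x y M : ℕ) :
    (x + y).choose M = ∑ k ∈ Finset.range (M + 1), x.choose k * y.choose (M - k) := by
  rw [Nat.add_choose_eq, Finset.Nat.sum_antidiagonal_eq_sum_range_succ_mk]

lemma tri {x y z : ℕ} (h : z ≤ y) :
    x.choose y * y.choose z = x.choose z * (x - z).choose (y - z) := by
  rcases le_or_gt y x with hyx | hyx
  · exact Nat.choose_mul h
  · rcases le_or_gt z x with hzx | hzx
    · rw [Nat.choose_eq_zero_of_lt hyx,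
        Nat.choose_eq_zero_of_lt (show x - z < y - z by omega), mul_zero, zero_mul]
    · rw [Nat.choose_eq_zero_of_lt hyx, Nat.choose_eq_zero_of_lt hzx, zero_mul, zero_mul]

lemma swap3 (a k j : ℕ) : a.choose k * (a - k).choose j = a.choose j * (a - j).choose k := by
  rcases le_or_gt (k + j) a with h | h
  · have h1 := Nat.choose_mul (n := a) (k := k + j) (s := k) (Nat.le_add_right _ _)
    have h2 := Nat.choose_mul (n := a) (k := k + j) (s := j) (Nat.le_add_left _ _)
    rw [Nat.add_sub_cancel_left] at h1
    rw [Nat.add_sub_cancel] at h2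
    rw [← h1, ← h2, Nat.choose_symm_add]
  · rcases le_or_gt k a with hk | hk
    · rcases le_or_gt j a with hj | hj
      · rw [Nat.choose_eq_zero_of_lt (show a - k < j by omega),
          Nat.choose_eq_zero_of_lt (show a - j < k by omega), mul_zero, mul_zero]
      · rw [Nat.choose_eq_zero_of_lt (show a - k < j by omega),
          Nat.choose_eq_zero_of_lt hj, mul_zero, zero_mul]
    · rw [Nat.choose_eq_zero_of_lt hk, zero_mul]
      rcases le_or_gt j a with hj | hj
      · rw [Nat.choose_eq_zero_of_lt (show a - j < k by omega), mul_zero]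
      · rw [Nat.choose_eq_zero_of_lt hj, zero_mul]

lemma natcore (a B M p : ℕ) (h1 : a + B ≤ p) (h2 : M ≤ a + B) (h3 : a + M ≤ p) :
    ∑ k ∈ Finset.range (M + 1), a.choose k * B.choose (M - k) * (p - k).choose (a + B)
      = (p - M).choose (a + B - M) * (p - a).choose M := by
  have key1 : ∀ k ∈ Finset.range (M + 1),
      a.choose k * B.choose (M - k) * (p - k).choose (a + B)
        = ∑ j ∈ Finset.range (a + B + 1),
            a.choose k * B.choose (M - k) * ((a - k).choose j * (p - a).choose (a + B - j)) := by
    intro k hk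
    rcases le_or_gt k a with hka | hka
    · have hpk : p - k = (a - k) + (p - a) := by omega
      rw [hpk, vand, Finset.mul_sum]
    · rw [Nat.choose_eq_zero_of_lt hka]
      simp [Nat.choose_eq_zero_of_lt hka]
  rw [Finset.sum_congr rfl key1, Finset.sum_comm]
  have key2 : ∀ j ∈ Finset.range (a + B + 1),
      (∑ k ∈ Finset.range (M + 1),
          a.choose k * B.choose (M - k) * ((a - k).choose j * (p - a).choose (a + B - j)))
        = (p - a).choose (a + B - j) * (a.choose j * (a - j + B).choose M) := by
    intro j _
    have step : ∀ k ∈ Finset.range (M + 1),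
        a.choose k * B.choose (M - k) * ((a - k).choose j * (p - a).choose (a + B - j))
          = (p - a).choose (a + B - j) * (a.choose j * ((a - j).choose k * B.choose (M - k))) := by
      intro k _
      have := swap3 a k j
      calc a.choose k * B.choose (M - k) * ((a - k).choose j * (p - a).choose (a + B - j))
          = (a.choose k * (a - k).choose j) * B.choose (M - k) * (p - a).choose (a + B - j) := by
            ring
        _ = (a.choose j * (a - j).choose k) * B.choose (M - k) * (p - a).choose (a + B - j) := by
            rw [this]
        _ = (p - a).choose (a + B - j) * (a.choose j * ((a - j).choose k * B.choose (M - k))) := by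
            ring
    rw [Finset.sum_congr rfl step, ← Finset.mul_sum, ← Finset.mul_sum, ← vand]
  rw [Finset.sum_congr rfl key2]
  have hsub : Finset.range (a + B - M + 1) ⊆ Finset.range (a + B + 1) :=
    Finset.range_subset_range.2 (by omega)
  have htail : ∀ j ∈ Finset.range (a + B + 1), j ∉ Finset.range (a + B - M + 1) →
      (p - a).choose (a + B - j) * (a.choose j * (a - j + B).choose M) = 0 := by
    intro j hj hj'
    have hjgt : a + B - M < j := by
      simp only [Finset.mem_range] at hj' ⊢
      omega
    rcases le_or_gt j a with hja | hja
    · rw [Nat.choose_eq_zero_of_lt (show a - j + B < M by omega)]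
      ring
    · rw [Nat.choose_eq_zero_of_lt hja]
      ring
  rw [← Finset.sum_subset hsub htail]
  have key3 : ∀ j ∈ Finset.range (a + B - M + 1),
      (p - a).choose (a + B - j) * (a.choose j * (a - j + B).choose M)
        = (p - a).choose M * (a.choose j * (p - a - M).choose (a + B - M - j)) := by
    intro j hj
    have hj' : j ≤ a + B - M := by
      simp only [Finset.mem_range] at hj
      omega
    rcases le_or_gt j a with hja | hja
    · have e1 : a - j + B = a + B - j := by omega
      have hM : M ≤ a + B - j := by omega
      have := tri (x := p - a) hM
      have e2 : a + B - j - M = a + B - M - j := by omega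
      calc (p - a).choose (a + B - j) * (a.choose j * (a - j + B).choose M)
          = ((p - a).choose (a + B - j) * (a + B - j).choose M) * a.choose j := by
            rw [e1]; ring
        _ = ((p - a).choose M * (p - a - M).choose (a + B - j - M)) * a.choose j := by rw [this]
        _ = (p - a).choose M * (a.choose j * (p - a - M).choose (a + B - M - j)) := by
            rw [e2]; ring
    · rw [Nat.choose_eq_zero_of_lt hja]
      ring
  rw [Finset.sum_congr rfl key3, ← Finset.mul_sum, ← vand,
    show a + (p - a - M) = p - M by omega, mul_comm]

lemma core (a B M p : ℕ) :
    ∑ k ∈ Finset.range (M + 1), C a k * C B ((M : ℤ) - k) * C ((p : ℤ) - k) ((a : ℤ) + B)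
      = C ((p : ℤ) - M) ((a : ℤ) + B - M) * C ((p : ℤ) - a) M := by
  by_cases h1 : a + B ≤ p
  · by_cases h2 : M ≤ a + B
    · by_cases h3 : a + M ≤ p
      · have term : ∀ k ∈ Finset.range (M + 1),
            C a k * C B ((M : ℤ) - k) * C ((p : ℤ) - k) ((a : ℤ) + B)
              = ((a.choose k * B.choose (M - k) * (p - k).choose (a + B) : ℕ) : ℤ) := by
          intro k hk
          have hkM : k ≤ M := by simpa [Nat.lt_succ_iff] using Finset.mem_range.mp hk
          rw [show (M : ℤ) - k = ((M - k : ℕ) : ℤ) by omega,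
            show (p : ℤ) - k = ((p - k : ℕ) : ℤ) by omega,
            show (a : ℤ) + B = ((a + B : ℕ) : ℤ) by push_cast; ring,
            C_nat, C_nat, C_nat]
          push_cast
          ring
        rw [Finset.sum_congr rfl term, ← Nat.cast_sum, natcore a B M p h1 h2 h3,
          show (p : ℤ) - M = ((p - M : ℕ) : ℤ) by omega,
          show (a : ℤ) + B - M = ((a + B - M : ℕ) : ℤ) by omega,
          show (p : ℤ) - a = ((p - a : ℕ) : ℤ) by omega,
          C_nat, C_nat]
        push_cast
        ring
      · rw [C_zero_of_lt (show (p : ℤ) - a < M by omega), mul_zero]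
        refine Finset.sum_eq_zero fun k hk => ?_
        have hkM : k ≤ M := by simpa [Nat.lt_succ_iff] using Finset.mem_range.mp hk
        rcases lt_or_ge (a : ℕ) k with h | hka
        · rw [C_nat, Nat.choose_eq_zero_of_lt h, Int.natCast_zero, zero_mul, zero_mul]
        rcases lt_or_ge (B : ℤ) ((M : ℤ) - k) with h | hBk
        · rw [C_zero_of_lt h, mul_zero, zero_mul]
        rcases lt_or_ge ((p : ℤ) - k) ((a : ℤ) + B) with h | hpk
        · rw [C_zero_of_lt h, mul_zero]
        omega
    · rw [C_zero_of_neg (show (a : ℤ) + B - M < 0 by omega), zero_mul]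
      refine Finset.sum_eq_zero fun k hk => ?_
      have hkM : k ≤ M := by simpa [Nat.lt_succ_iff] using Finset.mem_range.mp hk
      rcases lt_or_ge (a : ℕ) k with h | hka
      · rw [C_nat, Nat.choose_eq_zero_of_lt h, Int.natCast_zero, zero_mul, zero_mul]
      · rw [C_zero_of_lt (show (B : ℤ) < (M : ℤ) - k by omega), mul_zero, zero_mul]
  · rw [C_zero_of_lt (show (p : ℤ) - M < (a : ℤ) + B - M by omega), zero_mul]
    refine Finset.sum_eq_zero fun k hk => ?_
    rw [C_zero_of_lt (show (p : ℤ) - k < (a : ℤ) + B by omega), mul_zero]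

theorem stmt_6 (a b d n p : ℕ) :
    ∑ k ∈ Finset.range (n + 1), C a k * C b ((n : ℤ) - k) * C ((p : ℤ) - k) ((a : ℤ) + b - d) * C ((n : ℤ) - k) d = C ((d : ℤ) + p - n) ((a : ℤ) + b - n) * C ((p : ℤ) - a) ((n : ℤ) - d) * C b d := by
  by_cases hdb : d ≤ b
  · by_cases hdn : d ≤ n
    · set B := b - d with hB
      set M := n - d with hM
      have term : ∀ k ∈ Finset.range (n + 1),
          C a k * C b ((n : ℤ) - k) * C ((p : ℤ) - k) ((a : ℤ) + b - d) * C ((n : ℤ) - k) d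
            = C b d * (C a k * C B ((M : ℤ) - k) * C ((p : ℤ) - k) ((a : ℤ) + B)) := by
        intro k hk
        have hkn : k ≤ n := by simpa [Nat.lt_succ_iff] using Finset.mem_range.mp hk
        have hab : (a : ℤ) + b - d = (a : ℤ) + B := by omega
        have key : C b ((n : ℤ) - k) * C ((n : ℤ) - k) d = C b d * C B ((M : ℤ) - k) := by
          rcases le_or_gt k M with hkM | hkM
          · rw [show (n : ℤ) - k = ((n - k : ℕ) : ℤ) by omega,
              show (M : ℤ) - k = ((M - k : ℕ) : ℤ) by omega,
              C_nat, C_nat, C_nat, C_nat]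
            have := tri (x := b) (y := n - k) (z := d) (by omega)
            rw [← Nat.cast_mul, this, show b - d = B from rfl,
              show n - k - d = M - k by omega, Nat.cast_mul]
          · rw [C_zero_of_lt (show (n : ℤ) - k < d by omega),
              C_zero_of_neg (show (M : ℤ) - k < 0 by omega), mul_zero, mul_zero]
        calc C a k * C b ((n : ℤ) - k) * C ((p : ℤ) - k) ((a : ℤ) + b - d) * C ((n : ℤ) - k) d
            = (C b ((n : ℤ) - k) * C ((n : ℤ) - k) d) * C a k * C ((p : ℤ) - k) ((a : ℤ) + b - d) := by
              ring
          _ = (C b d * C B ((M : ℤ) - k)) * C a k * C ((p : ℤ) - k) ((a : ℤ) + B) := by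
              rw [key, hab]
          _ = C b d * (C a k * C B ((M : ℤ) - k) * C ((p : ℤ) - k) ((a : ℤ) + B)) := by ring
      rw [Finset.sum_congr rfl term, ← Finset.mul_sum]
      have hsub : Finset.range (M + 1) ⊆ Finset.range (n + 1) :=
        Finset.range_subset_range.2 (by omega)
      have htail : ∀ k ∈ Finset.range (n + 1), k ∉ Finset.range (M + 1) →
          C a k * C B ((M : ℤ) - k) * C ((p : ℤ) - k) ((a : ℤ) + B) = 0 := by
        intro k _ hk'
        have : M < k := by simp only [Finset.mem_range] at hk'; omega
        rw [C_zero_of_neg (show (M : ℤ) - k < 0 by omega), mul_zero, zero_mul]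
      rw [← Finset.sum_subset hsub htail, core a B M p,
        show (d : ℤ) + p - n = (p : ℤ) - M by omega,
        show (a : ℤ) + b - n = (a : ℤ) + B - M by omega,
        show (n : ℤ) - d = (M : ℤ) by omega]
      ring
    · rw [C_zero_of_neg (show (n : ℤ) - d < 0 by omega), mul_zero, zero_mul]
      refine Finset.sum_eq_zero fun k hk => ?_
      rw [C_zero_of_lt (show (n : ℤ) - k < d by omega), mul_zero]
  · rw [C_nat, Nat.choose_eq_zero_of_lt (by omega), Int.natCast_zero, mul_zero]
    refine Finset.sum_eq_zero fun k hk => ?_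
    rcases lt_or_ge ((n : ℤ) - k) (d : ℤ) with h | h
    · rw [C_zero_of_lt h, mul_zero]
    · rw [C_zero_of_lt (show (b : ℤ) < (n : ℤ) - k by omega), mul_zero, zero_mul, zero_mul]
end

section
/- (Nanjundiah's first identity) For all natural numbers a, b, p, we have ∑_{k=0}^{a} C(a,k)·C(b,k)·C(p+k, a+b) = C(p,a)·C(p,b). -/
open Finset

lemma C_natCast_s16 (x y : ℕ) : C (x : ℤ) (y : ℤ) = (x.choose y : ℤ) := by
  unfold C
  simp only [Int.toNat_natCast]
  split_ifs with h
  · rfl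
  · push_cast at h
    have : x < y := by omega
    simp [Nat.choose_eq_zero_of_lt this]

lemma nanju_stepA (a b p k : ℕ) (hk : k ≤ a) :
    (p + k).choose (a + b) = ∑ j ∈ range (a + 1), k.choose j * p.choose (a + b - j) := by
  rw [Nat.add_comm p k, Nat.add_choose_eq, Finset.Nat.sum_antidiagonal_eq_sum_range_succ_mk]
  refine (Finset.sum_subset (Finset.range_subset_range.2 (by omega)) ?_).symm
  intro j hj hj'
  simp only [mem_range] at hj hj'
  have : k < j := by omega
  simp [Nat.choose_eq_zero_of_lt this]

lemma nanju_stepB (a b j : ℕ) (hj : j ≤ a) :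
    ∑ m ∈ range (a + 1 - j), (a - j).choose m * b.choose (j + m) = (a - j + b).choose a := by
  rw [Nat.add_choose_eq, Finset.Nat.sum_antidiagonal_eq_sum_range_succ_mk]
  rw [← Finset.sum_subset (Finset.range_subset_range.2 (show a - j + 1 ≤ a + 1 by omega))
    (by intro i hi hi'
        simp only [mem_range] at hi hi'
        have : a - j < i := by omega
        simp [Nat.choose_eq_zero_of_lt this])]
  have h1 : a + 1 - j = a - j + 1 := by omega
  rw [h1, ← Finset.sum_range_reflect]
  refine Finset.sum_congr rfl ?_
  intro m hm
  simp only [mem_range] at hm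
  have hm' : m ≤ a - j := by omega
  have e1 : a - j + 1 - 1 - m = a - j - m := by omega
  have e2 : j + (a - j - m) = a - m := by omega
  rw [e1, e2, Nat.choose_symm hm']

lemma nanju_stepC (a b j : ℕ) (hj : j ≤ a) :
    ∑ k ∈ range (a + 1), a.choose k * k.choose j * b.choose k
      = a.choose j * (a - j + b).choose a := by
  have hsub : Finset.Ico j (a + 1) ⊆ range (a + 1) := by
    rw [Finset.range_eq_Ico]; exact Finset.Ico_subset_Ico (by omega) le_rfl
  rw [← Finset.sum_subset hsub (by
    intro k hk hk'
    simp only [mem_range, Finset.mem_Ico] at hk hk'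
    have : k < j := by omega
    simp [Nat.choose_eq_zero_of_lt this])]
  rw [Finset.sum_Ico_eq_sum_range]
  rw [← nanju_stepB a b j hj, Finset.mul_sum]
  refine Finset.sum_congr rfl ?_
  intro m hm
  simp only [mem_range] at hm
  have h1 : j + m ≤ a := by omega
  have := Nat.choose_mul (n := a) (Nat.le_add_right j m)
  rw [Nat.add_sub_cancel_left] at this
  rw [this]; ring

lemma nanju_nat (a b p : ℕ) :
    ∑ k ∈ range (a + 1), a.choose k * b.choose k * (p + k).choose (a + b)
      = p.choose a * p.choose b := by
  have h1 : ∑ k ∈ range (a + 1), a.choose k * b.choose k * (p + k).choose (a + b)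
      = ∑ j ∈ range (a + 1), a.choose j * (a - j + b).choose a * p.choose (a + b - j) := by
    calc ∑ k ∈ range (a + 1), a.choose k * b.choose k * (p + k).choose (a + b)
        = ∑ k ∈ range (a + 1), ∑ j ∈ range (a + 1),
            a.choose k * k.choose j * b.choose k * p.choose (a + b - j) := by
          refine Finset.sum_congr rfl fun k hk => ?_
          simp only [mem_range] at hk
          rw [nanju_stepA a b p k (by omega), Finset.mul_sum]
          exact Finset.sum_congr rfl fun j _ => by ring
      _ = ∑ j ∈ range (a + 1), ∑ k ∈ range (a + 1),
            a.choose k * k.choose j * b.choose k * p.choose (a + b - j) := Finset.sum_comm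
      _ = ∑ j ∈ range (a + 1), a.choose j * (a - j + b).choose a * p.choose (a + b - j) := by
          refine Finset.sum_congr rfl fun j hj => ?_
          simp only [mem_range] at hj
          rw [← Finset.sum_mul, nanju_stepC a b j (by omega)]
  rw [h1]
  have hsub : range (min a b + 1) ⊆ range (a + 1) := Finset.range_subset_range.2 (by omega)
  rw [← Finset.sum_subset hsub (by
    intro j hj hj'
    simp only [mem_range] at hj hj'
    have : a - j + b < a := by omega
    simp [Nat.choose_eq_zero_of_lt this])]
  by_cases hpa : p < a
  · rw [Nat.choose_eq_zero_of_lt hpa, Nat.zero_mul]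
    refine Finset.sum_eq_zero fun j hj => ?_
    simp only [mem_range] at hj
    have : p < a + b - j := by omega
    simp [Nat.choose_eq_zero_of_lt this]
  · push_neg at hpa
    have h2 : ∀ j ∈ range (min a b + 1),
        a.choose j * (a - j + b).choose a * p.choose (a + b - j)
          = p.choose a * (a.choose j * (p - a).choose (b - j)) := by
      intro j hj
      simp only [mem_range] at hj
      have hja : j ≤ a := by omega
      have hjb : j ≤ b := by omega
      have e0 : a + b - j = a - j + b := by omega
      rw [e0]
      by_cases h : a - j + b ≤ p
      · have := Nat.choose_mul (n := p) (show a ≤ a - j + b by omega)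
        have e1 : a - j + b - a = b - j := by omega
        rw [e1] at this
        rw [Nat.mul_assoc, Nat.mul_comm ((a - j + b).choose a), this]; ring
      · have h3 : p < a - j + b := by omega
        have h4 : p - a < b - j := by omega
        rw [Nat.choose_eq_zero_of_lt h3, Nat.choose_eq_zero_of_lt h4]
        ring
    rw [Finset.sum_congr rfl h2, ← Finset.mul_sum]
    congr 1
    have e : a + (p - a) = p := by omega
    have hv := Nat.add_choose_eq a (p - a) b
    rw [Finset.Nat.sum_antidiagonal_eq_sum_range_succ_mk, e] at hv
    rw [hv]
    simp only [Nat.succ_eq_add_one]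
    refine Finset.sum_subset (Finset.range_subset_range.2 (by omega)) ?_
    intro j hj hj'
    simp only [mem_range] at hj hj'
    have : a < j := by omega
    simp [Nat.choose_eq_zero_of_lt this]

theorem stmt_16 (a b p : ℕ) :
    ∑ k ∈ Finset.range (a + 1), C a k * C b k * C ((p : ℤ) + k) ((a : ℤ) + b) = C p a * C p b := by
  have : ∀ k : ℕ, C (a : ℤ) (k : ℤ) * C (b : ℤ) (k : ℤ) * C ((p : ℤ) + k) ((a : ℤ) + b)
      = ((a.choose k * b.choose k * (p + k).choose (a + b) : ℕ) : ℤ) := by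
    intro k
    have e1 : ((p : ℤ) + k) = ((p + k : ℕ) : ℤ) := by push_cast; ring
    have e2 : ((a : ℤ) + b) = ((a + b : ℕ) : ℤ) := by push_cast; ring
    rw [e1, e2, C_natCast_s16, C_natCast_s16, C_natCast_s16]
    push_cast; ring
  rw [Finset.sum_congr rfl fun k _ => this k, ← Nat.cast_sum, nanju_nat a b p,
    C_natCast_s16, C_natCast_s16]
  push_cast; ring
end
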